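/- Let K : ℝ → (0,∞) be an integral operator kernel on a compact set satisfying 0 < q_min ≤ K ≤ q_max. For any two strictly positive essentially bounded functions f, g bounded away from zero, the integral operator E(f)(x) = ∫ K(x,z) f(z) μ(dz) satisfies d_H(E(f), E(g)) ≤ tanh( (1/4) log(q_max²/q_min²) ) · d_H(f,g); in particular E is a strict contraction in the Hilbert metric. -/

import Mathlib

open MeasureTheory

/-- Hilbert projective metric: `d_H(f,g) = log( sup (f/g) / inf (f/g) )`. -/
noncomputable def dH {α : Type*} (f g : α → ℝ) : ℝ :=
  Real.log ((⨆ x, f x / g x) / (⨅ x, f x / g x))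

set_option maxHeartbeats 1000000 in
private lemma core_alg (a c s Tx Ty Ux Uy : ℝ) (ha : 0 < a) (hac : a ≤ c) (hs : 1 ≤ s)
    (hTx : 0 ≤ Tx) (hTy : 0 ≤ Ty) (hUx : 0 ≤ Ux) (hUy : 0 ≤ Uy)
    (hcon : a^2 * (Tx*Uy) ≤ c^2 * (Ty*Ux)) :
    (c + a*s)^2 * ((s^2*Tx + Ux) * (Ty + Uy)) ≤ (c*s + a)^2 * ((s^2*Ty + Uy) * (Tx + Ux)) := by
  have hc : 0 < c := lt_of_lt_of_le ha hac
  have hXn : 0 ≤ Tx*Ty := mul_nonneg hTx hTy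
  have hYn : 0 ≤ Ux*Uy := mul_nonneg hUx hUy
  have hZn : 0 ≤ Ty*Ux := mul_nonneg hTy hUx
  have hWn : 0 ≤ Tx*Uy := mul_nonneg hTx hUy
  have hF2 : 0 ≤ c^2*(Ty*Ux) - a^2*(Tx*Uy) := by linarith
  have e1 : (2*s*a*(Tx*Uy))^2 = (4*s^2*(a^2*(Tx*Uy)))*(Tx*Uy) := by ring
  have h1 : (4*s^2*(a^2*(Tx*Uy)))*(Tx*Uy) ≤ (4*s^2*(c^2*(Ty*Ux)))*(Tx*Uy) := by
    have h4 : 0 ≤ 4*s^2 := by positivity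
    exact mul_le_mul_of_nonneg_right (mul_le_mul_of_nonneg_left hcon h4) hWn
  have e3 : (4*s^2*(c^2*(Ty*Ux)))*(Tx*Uy) ≤ (c*(s^2*(Tx*Ty)+Ux*Uy))^2 := by
    nlinarith [sq_nonneg (c*(s^2*(Tx*Ty) - Ux*Uy))]
  have hsq : (2*s*a*(Tx*Uy))^2 ≤ (c*(s^2*(Tx*Ty)+Ux*Uy))^2 := by linarith
  have key2 : 0 ≤ c*(s^2*(Tx*Ty)+Ux*Uy) - 2*s*a*(Tx*Uy) := by
    have h2 : 0 ≤ 2*s*a*(Tx*Uy) := by positivity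
    have h3 : 0 ≤ c*(s^2*(Tx*Ty)+Ux*Uy) := by positivity
    nlinarith [hsq]
  have hs1 : 0 ≤ s^2 - 1 := by nlinarith
  have hca : 0 ≤ c^2 - a^2 := by nlinarith
  have hpos : 0 ≤ c*s^2+2*a*s+c := by positivity
  have hid : c * ((c*s + a)^2 * ((s^2*Ty + Uy) * (Tx + Ux)) - (c + a*s)^2 * ((s^2*Tx + Ux) * (Ty + Uy)))
      = (s^2-1)*((c^2-a^2)*(c*(s^2*(Tx*Ty)+Ux*Uy) - 2*s*a*(Tx*Uy)) + (c*s^2+2*a*s+c)*(c^2*(Ty*Ux) - a^2*(Tx*Uy))) := by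
    ring
  have h9 : 0 ≤ c * ((c*s + a)^2 * ((s^2*Ty + Uy) * (Tx + Ux)) - (c + a*s)^2 * ((s^2*Tx + Ux) * (Ty + Uy))) := by
    rw [hid]
    exact mul_nonneg hs1 (add_nonneg (mul_nonneg hca key2) (mul_nonneg hpos hF2))
  nlinarith [h9, hc, mul_pos hc hc]

private lemma ratio_key (a c s m M Px Py Qx Qy Tx Ty Ux Uy : ℝ)
    (ha : 0 < a) (hac : a ≤ c) (hs1 : 1 ≤ s) (hm : 0 < m) (hmM : m < M)
    (hs2 : s^2 = M/m)
    (hTx : Tx = Px - m*Qx) (hTy : Ty = Py - m*Qy)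
    (hUx : Ux = M*Qx - Px) (hUy : Uy = M*Qy - Py)
    (hTxn : 0 ≤ Tx) (hTyn : 0 ≤ Ty) (hUxn : 0 ≤ Ux) (hUyn : 0 ≤ Uy)
    (hcon : a^2*(Tx*Uy) ≤ c^2*(Ty*Ux))
    (hQx : 0 < Qx) (hQy : 0 < Qy) :
    Px / Qx ≤ ((c*s+a)/(c+a*s))^2 * (Py / Qy) := by
  have hc : 0 < c := lt_of_lt_of_le ha hac
  have CA := core_alg a c s Tx Ty Ux Uy ha hac hs1 hTxn hTyn hUxn hUyn hcon
  have e1x : s^2*Tx + Ux = ((M-m)/m) * Px := by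
    rw [hTx, hUx, hs2]; field_simp; ring
  have e1y : s^2*Ty + Uy = ((M-m)/m) * Py := by
    rw [hTy, hUy, hs2]; field_simp; ring
  have e2x : Tx + Ux = (M-m) * Qx := by rw [hTx, hUx]; ring
  have e2y : Ty + Uy = (M-m) * Qy := by rw [hTy, hUy]; ring
  rw [e1x, e1y, e2x, e2y] at CA
  have hk : 0 < (M-m)^2/m := div_pos (pow_pos (sub_pos.mpr hmM) 2) hm
  have e3 : (c + a*s)^2 * ((((M-m)/m) * Px) * ((M-m) * Qy))
      = ((M-m)^2/m) * ((c + a*s)^2 * (Px * Qy)) := by ring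
  have e4 : (c*s + a)^2 * ((((M-m)/m) * Py) * ((M-m) * Qx))
      = ((M-m)^2/m) * ((c*s + a)^2 * (Py * Qx)) := by ring
  rw [e3, e4] at CA
  have key : (c + a*s)^2 * (Px * Qy) ≤ (c*s + a)^2 * (Py * Qx) :=
    le_of_mul_le_mul_left CA hk
  have hB : 0 < c + a*s := by positivity
  have hA : 0 < c*s + a := by positivity
  have e5 : ((c*s+a)/(c+a*s))^2 * (Py / Qy) = ((c*s+a)^2 * Py)/((c+a*s)^2 * Qy) := by
    rw [div_pow, div_mul_div_comm]
  rw [e5, div_le_div_iff₀ hQx (by positivity)]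
  calc Px * ((c+a*s)^2 * Qy) = (c + a*s)^2 * (Px * Qy) := by ring
    _ ≤ (c*s + a)^2 * (Py * Qx) := key
    _ = (c*s+a)^2 * Py * Qx := by ring

private lemma log_core (a c s : ℝ) (ha : 0 < a) (hac : a ≤ c) (hs : 1 ≤ s) :
    Real.log ((c*s+a)/(c+a*s)) ≤ (c-a)/(c+a) * Real.log s := by
  have hc : 0 < c := lt_of_lt_of_le ha hac
  set L : ℝ := (c-a)/(c+a) with hL
  set h : ℝ → ℝ := fun t => L * Real.log t - Real.log (c*t+a) + Real.log (c+a*t) with hh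
  have HDA : ∀ t : ℝ, 0 < t →
      HasDerivAt h (L * t⁻¹ - (c*t+a)⁻¹*c + (c+a*t)⁻¹*a) t := by
    intro t ht
    have h1 : 0 < c*t+a := by positivity
    have h2 : 0 < c+a*t := by positivity
    have d1 : HasDerivAt (fun t : ℝ => L * Real.log t) (L * t⁻¹) t :=
      (Real.hasDerivAt_log (ne_of_gt ht)).const_mul L
    have d2 : HasDerivAt (fun t : ℝ => Real.log (c*t+a)) ((c*t+a)⁻¹*c) t := by
      have inner : HasDerivAt (fun t : ℝ => c*t+a) c t := by
        simpa using ((hasDerivAt_id t).const_mul c).add_const a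
      exact (Real.hasDerivAt_log (ne_of_gt h1)).comp t inner
    have d3 : HasDerivAt (fun t : ℝ => Real.log (c+a*t)) ((c+a*t)⁻¹*a) t := by
      have inner : HasDerivAt (fun t : ℝ => c+a*t) a t := by
        simpa using (((hasDerivAt_id t).const_mul a).const_add c)
      exact (Real.hasDerivAt_log (ne_of_gt h2)).comp t inner
    exact (d1.sub d2).add d3
  have mono : MonotoneOn h (Set.Ici 1) := by
    apply monotoneOn_of_deriv_nonneg (convex_Ici 1)
    · intro t ht
      have ht' : (0:ℝ) < t := lt_of_lt_of_le one_pos ht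
      exact (HDA t ht').continuousAt.continuousWithinAt
    · intro t ht
      rw [interior_Ici] at ht
      have ht' : (0:ℝ) < t := lt_trans one_pos ht
      exact (HDA t ht').differentiableAt.differentiableWithinAt
    · intro t ht
      rw [interior_Ici] at ht
      have ht1 : (1:ℝ) < t := ht
      have ht' : (0:ℝ) < t := lt_trans one_pos ht1
      rw [(HDA t ht').deriv]
      have h1 : 0 < c*t+a := by positivity
      have h2 : 0 < c+a*t := by positivity
      have hca : 0 < c + a := by positivity
      have key : L * t⁻¹ - (c*t+a)⁻¹*c + (c+a*t)⁻¹*a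
          = ((c-a)*a*c*(t-1)^2) / ((c+a)*(t*((c*t+a)*(c+a*t)))) := by
        rw [hL]; field_simp; ring
      rw [key]
      have hnum : 0 ≤ (c-a)*a*c*(t-1)^2 :=
        mul_nonneg (mul_nonneg (mul_nonneg (by linarith) ha.le) hc.le) (sq_nonneg _)
      positivity
  have h1eq : h 1 = 0 := by
    simp only [hh, Real.log_one, mul_one]
    ring
  have hmem1 : (1:ℝ) ∈ Set.Ici (1:ℝ) := Set.mem_Ici.2 le_rfl
  have hmems : s ∈ Set.Ici (1:ℝ) := Set.mem_Ici.2 hs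
  have hmono := mono hmem1 hmems hs
  rw [h1eq] at hmono
  have hs0 : (0:ℝ) < s := lt_of_lt_of_le one_pos hs
  have h1 : 0 < c*s+a := by positivity
  have h2 : 0 < c+a*s := by positivity
  rw [Real.log_div (ne_of_gt h1) (ne_of_gt h2)]
  simp only [hh] at hmono
  linarith

private lemma tanh_val (a c : ℝ) (ha : 0 < a) (hac : a ≤ c) :
    Real.tanh ((1/4) * Real.log (c^2/a^2)) = (c-a)/(c+a) := by
  have hc : 0 < c := lt_of_lt_of_le ha hac
  set y : ℝ := Real.sqrt (c/a) with hy
  have hca : 0 < c/a := by positivity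
  have hy0 : 0 < y := Real.sqrt_pos.2 hca
  have hy2 : y^2 = c/a := Real.sq_sqrt hca.le
  have hlog : (1/4) * Real.log (c^2/a^2) = Real.log y := by
    have e1 : c^2/a^2 = (c/a)^2 := by field_simp
    rw [e1, Real.log_pow]
    have e2 : Real.log (c/a) = Real.log (y^2) := by rw [hy2]
    rw [e2, Real.log_pow]
    push_cast
    ring
  rw [hlog, Real.tanh_eq_sinh_div_cosh, Real.sinh_eq, Real.cosh_eq,
    Real.exp_log hy0, Real.exp_neg, Real.exp_log hy0]
  have h2 : y*y*a = c := by
    have : y*y = c/a := by rw [← hy2]; ring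
    rw [this]; field_simp
  have hyne : y ≠ 0 := ne_of_gt hy0
  have hyy : (0:ℝ) < y + y⁻¹ := by positivity
  rw [div_div_div_cancel_right₀]
  · field_simp
    linear_combination 2*h2
  · norm_num

private lemma birkhoff_aux {α : Type*} [Nonempty α] (P Q : α → ℝ) (lo hi d : ℝ)
    (hlo : 0 < lo) (hlb : ∀ x, lo ≤ P x / Q x) (hub : ∀ x, P x / Q x ≤ hi)
    (hd : 0 < d) (hkey : ∀ x y, P x / Q x ≤ d * (P y / Q y)) :
    Real.log ((⨆ x, P x / Q x) / ⨅ x, P x / Q x) ≤ Real.log d := by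
  obtain ⟨x0⟩ := (inferInstance : Nonempty α)
  have hbA : BddAbove (Set.range fun x => P x / Q x) := ⟨hi, by rintro _ ⟨x, rfl⟩; exact hub x⟩
  have hbB : BddBelow (Set.range fun x => P x / Q x) := ⟨lo, by rintro _ ⟨x, rfl⟩; exact hlb x⟩
  have hI : 0 < ⨅ x, P x / Q x := lt_of_lt_of_le hlo (le_ciInf hlb)
  have hS : 0 < ⨆ x, P x / Q x := lt_of_lt_of_le hlo (le_trans (hlb x0) (le_ciSup hbA x0))
  have hSle : (⨆ x, P x / Q x) ≤ d * ⨅ x, P x / Q x := by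
    apply ciSup_le
    intro x
    rw [← div_le_iff₀' hd]
    exact le_ciInf fun y => (div_le_iff₀' hd).mpr (hkey x y)
  apply Real.log_le_log (div_pos hS hI)
  rw [div_le_iff₀ hI]
  exact hSle

set_option maxHeartbeats 1000000 in
theorem stmt7 {α β : Type*} [Nonempty α] [Nonempty β] [MeasurableSpace β]
    (μ : Measure β) [IsFiniteMeasure μ] (hμ : μ ≠ 0)
    (K : α → β → ℝ) (qmin qmax : ℝ) (hqmin : 0 < qmin)
    (hK : ∀ x z, qmin ≤ K x z ∧ K x z ≤ qmax)
    (hKm : ∀ x, Measurable (K x))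
    (f g : β → ℝ) (hfm : Measurable f) (hgm : Measurable g)
    (hfb : BddAbove (Set.range f)) (hgb : BddAbove (Set.range g))
    (hf : 0 < ⨅ z, f z) (hg : 0 < ⨅ z, g z) :
    dH (fun x => ∫ z, K x z * f z ∂μ) (fun x => ∫ z, K x z * g z ∂μ)
      ≤ Real.tanh ((1 / 4) * Real.log (qmax ^ 2 / qmin ^ 2)) * dH f g := by
  obtain ⟨x0⟩ := (inferInstance : Nonempty α)
  obtain ⟨z0⟩ := (inferInstance : Nonempty β)
  have hqq : qmin ≤ qmax := le_trans (hK x0 z0).1 (hK x0 z0).2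
  have hqmax : 0 < qmax := lt_of_lt_of_le hqmin hqq
  have hKpos : ∀ x z, 0 < K x z := fun x z => lt_of_lt_of_le hqmin (hK x z).1
  -- bounded below
  have hfbb : BddBelow (Set.range f) := by
    by_contra h
    rw [Real.iInf_of_not_bddBelow h] at hf
    exact lt_irrefl 0 hf
  have hgbb : BddBelow (Set.range g) := by
    by_contra h
    rw [Real.iInf_of_not_bddBelow h] at hg
    exact lt_irrefl 0 hg
  simp only [dH]
  set iF := ⨅ z, f z with hiF
  set iG := ⨅ z, g z with hiG
  set sF := ⨆ z, f z with hsF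
  set sG := ⨆ z, g z with hsG
  have hfl : ∀ z, iF ≤ f z := fun z => ciInf_le hfbb z
  have hgl : ∀ z, iG ≤ g z := fun z => ciInf_le hgbb z
  have hfu : ∀ z, f z ≤ sF := fun z => le_ciSup hfb z
  have hgu : ∀ z, g z ≤ sG := fun z => le_ciSup hgb z
  have hfpos : ∀ z, 0 < f z := fun z => lt_of_lt_of_le hf (hfl z)
  have hgpos : ∀ z, 0 < g z := fun z => lt_of_lt_of_le hg (hgl z)
  have hsGpos : 0 < sG := lt_of_lt_of_le (hgpos z0) (hgu z0)
  have hsFpos : 0 < sF := lt_of_lt_of_le (hfpos z0) (hfu z0)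
  have hrlo : ∀ z, iF / sG ≤ f z / g z := fun z =>
    div_le_div₀ (hfpos z).le (hfl z) (hgpos z) (hgu z)
  have hrhi : ∀ z, f z / g z ≤ sF / iG := fun z =>
    div_le_div₀ hsFpos.le (hfu z) hg (hgl z)
  set m := ⨅ z, f z / g z with hmdef
  set M := ⨆ z, f z / g z with hMdef
  have hRbb : BddBelow (Set.range fun z => f z / g z) :=
    ⟨iF/sG, by rintro _ ⟨z, rfl⟩; exact hrlo z⟩
  have hRba : BddAbove (Set.range fun z => f z / g z) :=
    ⟨sF/iG, by rintro _ ⟨z, rfl⟩; exact hrhi z⟩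
  have hml : ∀ z, m ≤ f z / g z := fun z => ciInf_le hRbb z
  have hmu : ∀ z, f z / g z ≤ M := fun z => le_ciSup hRba z
  have hmpos : 0 < m := lt_of_lt_of_le (div_pos hf hsGpos) (le_ciInf hrlo)
  have hmM : m ≤ M := le_trans (hml z0) (hmu z0)
  have hMpos : 0 < M := lt_of_lt_of_le hmpos hmM
  have hmg : ∀ z, m * g z ≤ f z := fun z => (le_div_iff₀ (hgpos z)).mp (hml z)
  have hMg : ∀ z, f z ≤ M * g z := fun z => (div_le_iff₀ (hgpos z)).mp (hmu z)
  set MU := (μ Set.univ).toReal with hMU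
  have hMUpos : 0 < MU :=
    ENNReal.toReal_pos (Measure.measure_univ_pos.mpr hμ).ne' (measure_ne_top μ _)
  -- integrability
  have intb : ∀ (h : β → ℝ) (C : ℝ), Measurable h → (∀ z, |h z| ≤ C) → Integrable h μ :=
    fun h C hmeas hb =>
      ⟨hmeas.aestronglyMeasurable,
        HasFiniteIntegral.of_bounded (C := C) (ae_of_all μ fun z => by
          rw [Real.norm_eq_abs]; exact hb z)⟩
  have intf : ∀ x, Integrable (fun z => K x z * f z) μ := fun x =>
    intb _ (qmax * sF) ((hKm x).mul hfm) (fun z => by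
      rw [abs_of_nonneg (mul_nonneg (hKpos x z).le (hfpos z).le)]
      exact mul_le_mul (hK x z).2 (hfu z) (hfpos z).le hqmax.le)
  have intg : ∀ x, Integrable (fun z => K x z * g z) μ := fun x =>
    intb _ (qmax * sG) ((hKm x).mul hgm) (fun z => by
      rw [abs_of_nonneg (mul_nonneg (hKpos x z).le (hgpos z).le)]
      exact mul_le_mul (hK x z).2 (hgu z) (hgpos z).le hqmax.le)
  have intT : ∀ x, Integrable (fun z => K x z * (f z - m * g z)) μ := fun x =>
    intb _ (qmax * sF) ((hKm x).mul (hfm.sub (hgm.const_mul m))) (fun z => by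
      have h1 : 0 ≤ f z - m * g z := by linarith [hmg z]
      have h2 : f z - m * g z ≤ sF := by nlinarith [hfu z, mul_pos hmpos (hgpos z)]
      rw [abs_of_nonneg (mul_nonneg (hKpos x z).le h1)]
      exact mul_le_mul (hK x z).2 h2 h1 hqmax.le)
  have intU : ∀ x, Integrable (fun z => K x z * (M * g z - f z)) μ := fun x =>
    intb _ (qmax * (M * sG)) ((hKm x).mul ((hgm.const_mul M).sub hfm)) (fun z => by
      have h1 : 0 ≤ M * g z - f z := by linarith [hMg z]
      have h2 : M * g z - f z ≤ M * sG := by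
        nlinarith [hfpos z, hgu z, hMpos]
      rw [abs_of_nonneg (mul_nonneg (hKpos x z).le h1)]
      exact mul_le_mul (hK x z).2 h2 h1 hqmax.le)
  have intV : Integrable (fun z => f z - m * g z) μ :=
    intb _ sF (hfm.sub (hgm.const_mul m)) (fun z => by
      have h1 : 0 ≤ f z - m * g z := by linarith [hmg z]
      rw [abs_of_nonneg h1]
      nlinarith [hfu z, mul_pos hmpos (hgpos z)])
  have intW : Integrable (fun z => M * g z - f z) μ :=
    intb _ (M * sG) ((hgm.const_mul M).sub hfm) (fun z => by
      have h1 : 0 ≤ M * g z - f z := by linarith [hMg z]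
      rw [abs_of_nonneg h1]
      nlinarith [hfpos z, hgu z, hMpos])
  -- linear relations
  have hPT : ∀ x, (∫ z, K x z * (f z - m * g z) ∂μ)
      = (∫ z, K x z * f z ∂μ) - m * ∫ z, K x z * g z ∂μ := by
    intro x
    have e : (fun z => K x z * (f z - m*g z)) = fun z => K x z * f z - m * (K x z * g z) := by
      funext z; ring
    rw [e, integral_sub (intf x) ((intg x).const_mul m), integral_const_mul]
  have hUQ : ∀ x, (∫ z, K x z * (M * g z - f z) ∂μ)
      = M * (∫ z, K x z * g z ∂μ) - ∫ z, K x z * f z ∂μ := by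
    intro x
    have e : (fun z => K x z * (M*g z - f z)) = fun z => M * (K x z * g z) - K x z * f z := by
      funext z; ring
    rw [e, integral_sub ((intg x).const_mul M) (intf x), integral_const_mul]
  have hTn : ∀ x, 0 ≤ ∫ z, K x z * (f z - m * g z) ∂μ := fun x =>
    integral_nonneg fun z => mul_nonneg (hKpos x z).le (by linarith [hmg z])
  have hUn : ∀ x, 0 ≤ ∫ z, K x z * (M * g z - f z) ∂μ := fun x =>
    integral_nonneg fun z => mul_nonneg (hKpos x z).le (by linarith [hMg z])
  -- cross bounds via V, W
  have hTub : ∀ x, (∫ z, K x z * (f z - m * g z) ∂μ) ≤ qmax * ∫ z, (f z - m * g z) ∂μ := by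
    intro x
    have h := integral_mono (intT x) (intV.const_mul qmax) (fun z =>
      mul_le_mul_of_nonneg_right (hK x z).2 (by linarith [hmg z]))
    rwa [integral_const_mul] at h
  have hTlb : ∀ x, qmin * (∫ z, (f z - m * g z) ∂μ) ≤ ∫ z, K x z * (f z - m * g z) ∂μ := by
    intro x
    have h := integral_mono (intV.const_mul qmin) (intT x) (fun z =>
      mul_le_mul_of_nonneg_right (hK x z).1 (by linarith [hmg z]))
    rwa [integral_const_mul] at h
  have hUub : ∀ x, (∫ z, K x z * (M * g z - f z) ∂μ) ≤ qmax * ∫ z, (M * g z - f z) ∂μ := by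
    intro x
    have h := integral_mono (intU x) (intW.const_mul qmax) (fun z =>
      mul_le_mul_of_nonneg_right (hK x z).2 (by linarith [hMg z]))
    rwa [integral_const_mul] at h
  have hUlb : ∀ x, qmin * (∫ z, (M * g z - f z) ∂μ) ≤ ∫ z, K x z * (M * g z - f z) ∂μ := by
    intro x
    have h := integral_mono (intW.const_mul qmin) (intU x) (fun z =>
      mul_le_mul_of_nonneg_right (hK x z).1 (by linarith [hMg z]))
    rwa [integral_const_mul] at h
  have hcross : ∀ x y, qmin^2 * ((∫ z, K x z * (f z - m * g z) ∂μ) * ∫ z, K y z * (M * g z - f z) ∂μ)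
      ≤ qmax^2 * ((∫ z, K y z * (f z - m * g z) ∂μ) * ∫ z, K x z * (M * g z - f z) ∂μ) := by
    intro x y
    have h1 : qmin * (∫ z, K x z * (f z - m * g z) ∂μ) ≤ qmax * ∫ z, K y z * (f z - m * g z) ∂μ := by
      have a1 := mul_le_mul_of_nonneg_left (hTub x) hqmin.le
      have a2 := mul_le_mul_of_nonneg_left (hTlb y) hqmax.le
      nlinarith [a1, a2]
    have h2 : qmin * (∫ z, K y z * (M * g z - f z) ∂μ) ≤ qmax * ∫ z, K x z * (M * g z - f z) ∂μ := by
      have a1 := mul_le_mul_of_nonneg_left (hUub y) hqmin.le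
      have a2 := mul_le_mul_of_nonneg_left (hUlb x) hqmax.le
      nlinarith [a1, a2]
    have h3 := mul_le_mul h1 h2 (mul_nonneg hqmin.le (hUn y)) (mul_nonneg hqmax.le (hTn y))
    nlinarith [h3]
  -- positivity and bounds for P, Q
  have hPlb : ∀ x, qmin * iF * MU ≤ ∫ z, K x z * f z ∂μ := by
    intro x
    have h := integral_mono (integrable_const (qmin * iF)) (intf x) (fun z =>
      mul_le_mul (hK x z).1 (hfl z) hf.le (hKpos x z).le)
    rw [integral_const, smul_eq_mul] at h
    calc qmin * iF * MU = MU * (qmin * iF) := by ring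
      _ ≤ _ := h
  have hQlb : ∀ x, qmin * iG * MU ≤ ∫ z, K x z * g z ∂μ := by
    intro x
    have h := integral_mono (integrable_const (qmin * iG)) (intg x) (fun z =>
      mul_le_mul (hK x z).1 (hgl z) hg.le (hKpos x z).le)
    rw [integral_const, smul_eq_mul] at h
    calc qmin * iG * MU = MU * (qmin * iG) := by ring
      _ ≤ _ := h
  have hPub : ∀ x, (∫ z, K x z * f z ∂μ) ≤ qmax * sF * MU := by
    intro x
    have h := integral_mono (intf x) (integrable_const (qmax * sF)) (fun z =>
      mul_le_mul (hK x z).2 (hfu z) (hfpos z).le hqmax.le)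
    rw [integral_const, smul_eq_mul] at h
    calc (∫ z, K x z * f z ∂μ) ≤ MU * (qmax * sF) := h
      _ = qmax * sF * MU := by ring
  have hQub : ∀ x, (∫ z, K x z * g z ∂μ) ≤ qmax * sG * MU := by
    intro x
    have h := integral_mono (intg x) (integrable_const (qmax * sG)) (fun z =>
      mul_le_mul (hK x z).2 (hgu z) (hgpos z).le hqmax.le)
    rw [integral_const, smul_eq_mul] at h
    calc (∫ z, K x z * g z ∂μ) ≤ MU * (qmax * sG) := h
      _ = qmax * sG * MU := by ring
  have hPpos : ∀ x, 0 < ∫ z, K x z * f z ∂μ := fun x =>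
    lt_of_lt_of_le (by positivity) (hPlb x)
  have hQpos : ∀ x, 0 < ∫ z, K x z * g z ∂μ := fun x =>
    lt_of_lt_of_le (by positivity) (hQlb x)
  -- case split
  by_cases hcase : M = m
  · -- f/g constant
    have hfg : ∀ z, f z = m * g z := by
      intro z
      have h2 := hmu z; rw [hcase] at h2
      have : f z / g z = m := le_antisymm h2 (hml z)
      exact (div_eq_iff (hgpos z).ne').mp this
    have hrr : (fun x : α => (∫ z, K x z * f z ∂μ) / ∫ z, K x z * g z ∂μ) = fun _ => m := by
      funext x
      have e1 : (∫ z, K x z * f z ∂μ) = m * ∫ z, K x z * g z ∂μ := by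
        rw [← integral_const_mul]
        congr 1
        funext z
        rw [hfg z]; ring
      rw [e1, mul_div_assoc,
        div_self (show (∫ z, K x z * g z ∂μ) ≠ 0 from (hQpos x).ne'), mul_one]
    rw [show (⨆ x, (∫ z, K x z * f z ∂μ) / ∫ z, K x z * g z ∂μ)
        = ⨆ x, (fun x : α => (∫ z, K x z * f z ∂μ) / ∫ z, K x z * g z ∂μ) x from rfl, hrr]
    rw [ciSup_const, ciInf_const, div_self hmpos.ne', Real.log_one, hcase,
      div_self hmpos.ne', Real.log_one, mul_zero]
  · have hmM' : m < M := lt_of_le_of_ne hmM (Ne.symm hcase)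
    set s := Real.sqrt (M / m) with hsdef
    have hMm1 : 1 ≤ M / m := (one_le_div hmpos).mpr hmM
    have hs1 : 1 ≤ s := Real.one_le_sqrt.mpr hMm1
    have hs2 : s^2 = M/m := Real.sq_sqrt (by positivity)
    have hd : 0 < ((qmax*s+qmin)/(qmax+qmin*s))^2 := by positivity
    have hkey : ∀ x y, (∫ z, K x z * f z ∂μ) / (∫ z, K x z * g z ∂μ)
        ≤ ((qmax*s+qmin)/(qmax+qmin*s))^2 * ((∫ z, K y z * f z ∂μ) / ∫ z, K y z * g z ∂μ) := by
      intro x y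
      exact ratio_key qmin qmax s m M _ _ _ _ _ _ _ _ hqmin hqq hs1 hmpos hmM' hs2
        (hPT x) (hPT y) (hUQ x) (hUQ y) (hTn x) (hTn y) (hUn x) (hUn y)
        (hcross x y) (hQpos x) (hQpos y)
    have hmain := birkhoff_aux (fun x => ∫ z, K x z * f z ∂μ) (fun x => ∫ z, K x z * g z ∂μ)
      ((qmin * iF * MU)/(qmax * sG * MU)) ((qmax * sF * MU)/(qmin * iG * MU))
      (((qmax*s+qmin)/(qmax+qmin*s))^2)
      (by positivity)
      (fun x => div_le_div₀ (hPpos x).le (hPlb x) (hQpos x) (hQub x))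
      (fun x => div_le_div₀ (by positivity) (hPub x) (by positivity) (hQlb x))
      hd hkey
    refine le_trans hmain ?_
    -- log d ≤ tanh * log (M/m)
    rw [tanh_val qmin qmax hqmin hqq]
    have hlog2 : Real.log (((qmax*s+qmin)/(qmax+qmin*s))^2)
        = 2 * Real.log ((qmax*s+qmin)/(qmax+qmin*s)) := by
      rw [Real.log_pow]; push_cast; ring
    have hlog3 := log_core qmin qmax s hqmin hqq hs1
    have hlog4 : Real.log (M/m) = 2 * Real.log s := by
      rw [← hs2, Real.log_pow]; push_cast; ring
    rw [hlog2, hlog4]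
    have hcoef : 0 ≤ (qmax - qmin)/(qmax + qmin) := by
      apply div_nonneg (by linarith) (by linarith)
    nlinarith [hlog3]
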